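/- arXiv:1607.07844 — 2 statements merged into one kernel-verified Lean document; each statement's English description precedes it below -/
import Mathlib

section
/- Suppose c₀ := inf_{a_G < y < b_F} C(y) > 0. Let l ≤ u be measurable functions in L²(F) and define g^l = [∫_{Y<t}(l(Y) − u(t)) dF(t)]/C(Y) − ∫_T^Y [∫_{y<t}(u(y) − l(t)) dF(t)]/C²(y) dF*(y) and g^u = [∫_{Y<t}(u(Y) − l(t)) dF(t)]/C(Y) − ∫_T^Y [∫_{y<t}(l(y) − u(t)) dF(t)]/C²(y) dF*(y). Then for every measurable φ with l ≤ φ ≤ u one has g^l ≤ ζ(φ) ≤ g^u, and there is a constant K, depending only on c₀, such that E[(g^u − g^l)²] ≤ K ∫ (u − l)² dF, where the expectation is taken with respect to the law of the observed pair (Y, T). -/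
open MeasureTheory ProbabilityTheory Filter Set
open scoped ENNReal NNReal Topology BigOperators

noncomputable section

namespace RLTM

/-- The (cumulative) distribution function of a measure on `ℝ`. -/
def cdf (m : Measure ℝ) (x : ℝ) : ℝ := (m (Iic x)).toReal

/-- The left limit `F(x⁻)` of the distribution function of a measure on `ℝ`. -/
def cdfLeft (m : Measure ℝ) (x : ℝ) : ℝ := (m (Iio x)).toReal

/-- `α = P(T⁰ ≤ Y⁰)` where `Y⁰ ~ μ` and `T⁰ ~ ν` are independent. -/
def alpha (μ ν : Measure ℝ) : ℝ≥0∞ := (μ.prod ν) {p : ℝ × ℝ | p.2 ≤ p.1}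

/-- The law of an observed pair `(Y, T)`: the conditional law of `(Y⁰, T⁰)` given `T⁰ ≤ Y⁰`. -/
def obsLaw (μ ν : Measure ℝ) : Measure (ℝ × ℝ) :=
  (alpha μ ν)⁻¹ • ((μ.prod ν).restrict {p : ℝ × ℝ | p.2 ≤ p.1})

/-- The law `F*` of `Y`, the first coordinate of an observed pair. -/
def Fstar (μ ν : Measure ℝ) : Measure ℝ := (obsLaw μ ν).map Prod.fst

/-- The law `G*` of `T`, the second coordinate of an observed pair. -/
def Gstar (μ ν : Measure ℝ) : Measure ℝ := (obsLaw μ ν).map Prod.snd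

/-- `C(y) = G*(y) − F*(y⁻)`. -/
def Cfun (μ ν : Measure ℝ) (y : ℝ) : ℝ := cdf (Gstar μ ν) y - cdfLeft (Fstar μ ν) y

/-- The lower boundary `a_F = inf {x : F(x) > 0}` of the support, as an extended real. -/
def lowerBound (m : Measure ℝ) : EReal := sInf {x : EReal | ∃ r : ℝ, x = (r : EReal) ∧ 0 < cdf m r}

/-- The upper boundary `b_F = sup {x : F(x) < 1}` of the support, as an extended real. -/
def upperBound (m : Measure ℝ) : EReal := sSup {x : EReal | ∃ r : ℝ, x = (r : EReal) ∧ cdf m r < 1}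

variable {Ω : Type*}

/-- `C_n(y) = n⁻¹ Σ_{i<n} I(T_i ≤ y ≤ Y_i)`, where `Z i = (Y_i, T_i)`. -/
def Cn (Z : ℕ → Ω → ℝ × ℝ) (n : ℕ) (ω : Ω) (y : ℝ) : ℝ :=
  (n : ℝ)⁻¹ * ∑ i ∈ Finset.range n, if (Z i ω).2 ≤ y ∧ y ≤ (Z i ω).1 then (1 : ℝ) else 0

/-- The Lynden-Bell factor `(n C_n(Y_i) − 1)/(n C_n(Y_i))`. -/
def LBfactor (Z : ℕ → Ω → ℝ × ℝ) (n : ℕ) (ω : Ω) (i : ℕ) : ℝ :=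
  ((n : ℝ) * Cn Z n ω (Z i ω).1 - 1) / ((n : ℝ) * Cn Z n ω (Z i ω).1)

/-- The Lynden-Bell estimator `F_n(y) = 1 − ∏_{i : Y_i ≤ y} (n C_n(Y_i) − 1)/(n C_n(Y_i))`. -/
def Fn (Z : ℕ → Ω → ℝ × ℝ) (n : ℕ) (ω : Ω) (y : ℝ) : ℝ :=
  1 - ∏ i ∈ Finset.range n, if (Z i ω).1 ≤ y then LBfactor Z n ω i else 1

/-- The left limit `F_n(y⁻)` of the Lynden-Bell estimator. -/
def FnLeft (Z : ℕ → Ω → ℝ × ℝ) (n : ℕ) (ω : Ω) (y : ℝ) : ℝ :=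
  1 - ∏ i ∈ Finset.range n, if (Z i ω).1 < y then LBfactor Z n ω i else 1

/-- The jump of the Lynden-Bell estimator at the data point `Y_j`. -/
def jump (Z : ℕ → Ω → ℝ × ℝ) (n : ℕ) (ω : Ω) (j : ℕ) : ℝ :=
  Fn Z n ω (Z j ω).1 - FnLeft Z n ω (Z j ω).1

/-- The Lynden-Bell integral `∫ φ dF_n`, the sum of `φ(Y_j)` against the jumps of `F_n`. -/
def lynInt (Z : ℕ → Ω → ℝ × ℝ) (n : ℕ) (ω : Ω) (φ : ℝ → ℝ) : ℝ :=
  ∑ j ∈ Finset.range n, jump Z n ω j * φ ((Z j ω).1)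

/-- `ψ(w) = ∫_{w<t} (φ(w) − φ(t)) dF(t)`. -/
def psi (μ : Measure ℝ) (φ : ℝ → ℝ) (w : ℝ) : ℝ := ∫ t in Ioi w, (φ w - φ t) ∂μ

/-- `ζ(φ) = ψ(Y)/C(Y) − ∫_T^Y ψ(y)/C²(y) dF*(y)`, as a function of the observed pair. -/
def zeta (μ ν : Measure ℝ) (φ : ℝ → ℝ) (p : ℝ × ℝ) : ℝ :=
  psi μ φ p.1 / Cfun μ ν p.1 -
    ∫ y in Ioc p.2 p.1, psi μ φ y / (Cfun μ ν y) ^ 2 ∂(Fstar μ ν)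

/-- `Cov(ζ(φ₁), ζ(φ₂))` under the law of an observed pair. -/
def covZeta (μ ν : Measure ℝ) (φ₁ φ₂ : ℝ → ℝ) : ℝ :=
  ∫ p, zeta μ ν φ₁ p * zeta μ ν φ₂ p ∂(obsLaw μ ν) -
    (∫ p, zeta μ ν φ₁ p ∂(obsLaw μ ν)) * (∫ p, zeta μ ν φ₂ p ∂(obsLaw μ ν))

/-- A measure `ν` on `Fin k → ℝ` is a centered Gaussian with covariance matrix `S`
(Cramér–Wold characterization). -/
def IsCenteredGaussianVec {k : ℕ} (m : Measure (Fin k → ℝ)) (S : Fin k → Fin k → ℝ) : Prop :=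
  ∀ l : Fin k → ℝ, m.map (fun x => ∑ i, l i * x i) =
    gaussianReal 0 (Real.toNNReal (∑ i, ∑ j, l i * l j * S i j))

/-- The `L²(m)` bracketing number `N_[](ε, 𝓕, L²(m))` of a class of functions, in `ℕ∞`. -/
def bracketNum2 {α : Type*} [MeasurableSpace α] (m : Measure α) (𝓕 : Set (α → ℝ)) (ε : ℝ) : ℕ∞ :=
  sInf {n : ℕ∞ | ∃ B : Finset ((α → ℝ) × (α → ℝ)), (B.card : ℕ∞) = n ∧
    (∀ b ∈ B, ∫⁻ x, ENNReal.ofReal ((b.2 x - b.1 x) ^ 2) ∂m < ENNReal.ofReal (ε ^ 2)) ∧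
    ∀ φ ∈ 𝓕, ∃ b ∈ B, ∀ x, b.1 x ≤ φ x ∧ φ x ≤ b.2 x}

/-- The `L¹(m)` bracketing number `N_[](ε, 𝓕, L¹(m))` of a class of functions, in `ℕ∞`. -/
def bracketNum1 {α : Type*} [MeasurableSpace α] (m : Measure α) (𝓕 : Set (α → ℝ)) (ε : ℝ) : ℕ∞ :=
  sInf {n : ℕ∞ | ∃ B : Finset ((α → ℝ) × (α → ℝ)), (B.card : ℕ∞) = n ∧
    (∀ b ∈ B, ∫⁻ x, ENNReal.ofReal (b.2 x - b.1 x) ∂m < ENNReal.ofReal ε) ∧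
    ∀ φ ∈ 𝓕, ∃ b ∈ B, ∀ x, b.1 x ≤ φ x ∧ φ x ≤ b.2 x}

/-- Finiteness of the bracketing entropy integral `J(δ) = ∫₀^δ √(log N_[](ε, 𝓕, L²(m))) dε`. -/
def JFinite {α : Type*} [MeasurableSpace α] (m : Measure α) (𝓕 : Set (α → ℝ)) (δ : ℝ) : Prop :=
  (∀ ε : ℝ, 0 < ε → bracketNum2 m 𝓕 ε ≠ ⊤) ∧
    IntegrableOn (fun ε => Real.sqrt (Real.log ((bracketNum2 m 𝓕 ε).toNat : ℝ))) (Ioc 0 δ)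

/-- The squared `L²(m)` distance `d(φ₁, φ₂)² = ∫ (φ₁ − φ₂)² dm`, valued in `ℝ≥0∞`. -/
def dL2sq {α : Type*} [MeasurableSpace α] (m : Measure α) (φ₁ φ₂ : α → ℝ) : ℝ≥0∞ :=
  ∫⁻ x, ENNReal.ofReal ((φ₁ x - φ₂ x) ^ 2) ∂m


/-- The lower bracket `g^l` for the transformed class, built from a bracket `[l, u]`. -/
def bracketLow (μ ν : Measure ℝ) (l u : ℝ → ℝ) (p : ℝ × ℝ) : ℝ :=
  (∫ t in Ioi p.1, (l p.1 - u t) ∂μ) / Cfun μ ν p.1 -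
    ∫ y in Ioc p.2 p.1, (∫ t in Ioi y, (u y - l t) ∂μ) / (Cfun μ ν y) ^ 2 ∂(Fstar μ ν)

/-- The upper bracket `g^u` for the transformed class, built from a bracket `[l, u]`. -/
def bracketHigh (μ ν : Measure ℝ) (l u : ℝ → ℝ) (p : ℝ × ℝ) : ℝ :=
  (∫ t in Ioi p.1, (u p.1 - l t) ∂μ) / Cfun μ ν p.1 -
    ∫ y in Ioc p.2 p.1, (∫ t in Ioi y, (l y - u t) ∂μ) / (Cfun μ ν y) ^ 2 ∂(Fstar μ ν)

section Aux
set_option maxHeartbeats 1000000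
set_option linter.unusedSectionVars false

variable (μ ν : Measure ℝ)

lemma measE : MeasurableSet {p : ℝ × ℝ | p.2 ≤ p.1} :=
  measurableSet_le measurable_snd measurable_fst

variable [IsProbabilityMeasure μ] [IsProbabilityMeasure ν]

lemma alpha_ne_top : alpha μ ν ≠ ⊤ := by
  have h : alpha μ ν ≤ 1 := by
    have := measure_mono (μ := μ.prod ν) (subset_univ {p : ℝ × ℝ | p.2 ≤ p.1})
    simpa [alpha] using this
  exact ne_top_of_le_ne_top ENNReal.one_ne_top h

lemma obsLaw_apply {B : Set (ℝ × ℝ)} (hB : MeasurableSet B) :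
    obsLaw μ ν B = (alpha μ ν)⁻¹ * (μ.prod ν) (B ∩ {p : ℝ × ℝ | p.2 ≤ p.1}) := by
  rw [obsLaw, Measure.smul_apply, Measure.restrict_apply hB, smul_eq_mul]

lemma isProb_obsLaw (hα : alpha μ ν ≠ 0) : IsProbabilityMeasure (obsLaw μ ν) := by
  constructor
  rw [obsLaw_apply μ ν MeasurableSet.univ, univ_inter]
  exact ENNReal.inv_mul_cancel hα (alpha_ne_top μ ν)

lemma Fstar_apply {A : Set ℝ} (hA : MeasurableSet A) :
    Fstar μ ν A = (alpha μ ν)⁻¹ * (μ.prod ν) ((Prod.fst ⁻¹' A) ∩ {p : ℝ × ℝ | p.2 ≤ p.1}) := by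
  rw [Fstar, Measure.map_apply measurable_fst hA, obsLaw_apply μ ν (measurable_fst hA)]

lemma Gstar_apply {A : Set ℝ} (hA : MeasurableSet A) :
    Gstar μ ν A = (alpha μ ν)⁻¹ * (μ.prod ν) ((Prod.snd ⁻¹' A) ∩ {p : ℝ × ℝ | p.2 ≤ p.1}) := by
  rw [Gstar, Measure.map_apply measurable_snd hA, obsLaw_apply μ ν (measurable_snd hA)]

lemma Fstar_le_smul : Fstar μ ν ≤ (alpha μ ν)⁻¹ • μ := by
  refine Measure.le_iff.2 fun s hs => ?_
  rw [Fstar_apply μ ν hs, Measure.smul_apply, smul_eq_mul]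
  refine mul_le_mul_right ?_ _
  calc (μ.prod ν) ((Prod.fst ⁻¹' s) ∩ {p : ℝ × ℝ | p.2 ≤ p.1})
      ≤ (μ.prod ν) (Prod.fst ⁻¹' s) := measure_mono inter_subset_left
    _ = μ s := by rw [← Set.prod_univ, Measure.prod_prod, measure_univ, mul_one]

lemma Fstar_ac : Fstar μ ν ≪ μ :=
  Measure.absolutelyContinuous_of_le_smul (Fstar_le_smul μ ν)

lemma isProb_Fstar (hα : alpha μ ν ≠ 0) : IsProbabilityMeasure (Fstar μ ν) := by
  haveI := isProb_obsLaw μ ν hα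
  exact Measure.isProbabilityMeasure_map measurable_fst.aemeasurable

lemma isProb_Gstar (hα : alpha μ ν ≠ 0) : IsProbabilityMeasure (Gstar μ ν) := by
  haveI := isProb_obsLaw μ ν hα
  exact Measure.isProbabilityMeasure_map measurable_snd.aemeasurable

lemma Fstar_singleton_le_Cfun (hα : alpha μ ν ≠ 0) (y : ℝ) :
    ((Fstar μ ν) {y}).toReal ≤ Cfun μ ν y := by
  haveI := isProb_Fstar μ ν hα
  haveI := isProb_Gstar μ ν hα
  have h1 : Fstar μ ν (Iic y) ≤ Gstar μ ν (Iic y) := by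
    rw [Fstar_apply μ ν measurableSet_Iic, Gstar_apply μ ν measurableSet_Iic]
    refine mul_le_mul_right (measure_mono ?_) _
    rintro ⟨a, b⟩ ⟨(ha : a ≤ y), (hb : b ≤ a)⟩
    exact ⟨hb.trans ha, hb⟩
  have h2 : Fstar μ ν (Iic y) = Fstar μ ν (Iio y) + Fstar μ ν {y} := by
    rw [← Iio_union_right, measure_union (by simp) (measurableSet_singleton y)]
  have hfin1 : Fstar μ ν (Iio y) ≠ ⊤ := measure_ne_top _ _
  have hfin2 : Fstar μ ν {y} ≠ ⊤ := measure_ne_top _ _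
  have h3 : (Fstar μ ν (Iio y)).toReal + (Fstar μ ν {y}).toReal ≤ (Gstar μ ν (Iic y)).toReal := by
    rw [← ENNReal.toReal_add hfin1 hfin2, ← h2]
    exact ENNReal.toReal_mono (measure_ne_top _ _) h1
  have : Cfun μ ν y = (Gstar μ ν (Iic y)).toReal - (Fstar μ ν (Iio y)).toReal := rfl
  rw [this]
  linarith

lemma Cfun_nonneg (hα : alpha μ ν ≠ 0) (y : ℝ) : 0 ≤ Cfun μ ν y :=
  le_trans ENNReal.toReal_nonneg (Fstar_singleton_le_Cfun μ ν hα y)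

lemma measurable_Cfun (hα : alpha μ ν ≠ 0) : Measurable (Cfun μ ν) := by
  haveI := isProb_Fstar μ ν hα
  haveI := isProb_Gstar μ ν hα
  have h1 : Monotone fun y => (Gstar μ ν (Iic y)).toReal := by
    intro a b hab
    exact ENNReal.toReal_mono (measure_ne_top _ _) (measure_mono (Iic_subset_Iic.2 hab))
  have h2 : Monotone fun y => (Fstar μ ν (Iio y)).toReal := by
    intro a b hab
    exact ENNReal.toReal_mono (measure_ne_top _ _) (measure_mono (Iio_subset_Iio hab))
  exact h1.measurable.sub h2.measurable

end Aux
section Aux2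
set_option maxHeartbeats 1000000
set_option linter.unusedSectionVars false

variable (μ ν : Measure ℝ) [IsProbabilityMeasure μ] [IsProbabilityMeasure ν]

lemma nu_Iic_eq_zero {s : ℝ} (hs : (s : EReal) < lowerBound ν) : ν (Iic s) = 0 := by
  by_contra h
  have hpos : 0 < cdf ν s := ENNReal.toReal_pos h (measure_ne_top _ _)
  have : lowerBound ν ≤ (s : EReal) := sInf_le ⟨s, rfl, hpos⟩
  exact absurd hs this.not_gt

lemma Fstar_lower_null : Fstar μ ν {y : ℝ | (y : EReal) < lowerBound ν} = 0 := by
  have hSm : MeasurableSet {y : ℝ | (y : EReal) < lowerBound ν} :=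
    continuous_coe_real_ereal.measurable (measurableSet_Iio (a := lowerBound ν))
  rw [Fstar_apply μ ν hSm]
  have hB : MeasurableSet ((Prod.fst ⁻¹' {y : ℝ | (y : EReal) < lowerBound ν}) ∩
      {p : ℝ × ℝ | p.2 ≤ p.1}) := (hSm.preimage measurable_fst).inter (measE)
  have : (μ.prod ν) ((Prod.fst ⁻¹' {y : ℝ | (y : EReal) < lowerBound ν}) ∩
      {p : ℝ × ℝ | p.2 ≤ p.1}) = 0 := by
    rw [Measure.prod_apply hB]
    have hz : ∀ x : ℝ, ν (Prod.mk x ⁻¹' ((Prod.fst ⁻¹' {y : ℝ | (y : EReal) < lowerBound ν}) ∩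
        {p : ℝ × ℝ | p.2 ≤ p.1})) = 0 := by
      intro x
      by_cases hx : (x : EReal) < lowerBound ν
      · refine measure_mono_null (fun t ht => ?_) (nu_Iic_eq_zero ν hx)
        exact ht.2
      · exact measure_mono_null (fun t ht => absurd ht.1 hx) measure_empty
    simp only [hz, lintegral_zero]
  rw [this, mul_zero]

lemma mu_Iic_eq_one {s : ℝ} (hs : upperBound μ < (s : EReal)) : μ (Iic s) = 1 := by
  have h1 : ¬ cdf μ s < 1 := by
    intro h
    have hmem : (s : EReal) ∈ {x : EReal | ∃ r : ℝ, x = (r : EReal) ∧ cdf μ r < 1} :=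
      ⟨s, rfl, h⟩
    exact absurd hs (le_sSup hmem).not_gt
  have h2 : cdf μ s ≤ 1 := by
    have : μ (Iic s) ≤ 1 := prob_le_one
    simpa [cdf] using ENNReal.toReal_mono ENNReal.one_ne_top this
  have h3 : cdf μ s = 1 := le_antisymm h2 (not_lt.1 h1)
  exact (ENNReal.toReal_eq_one_iff _).1 h3

lemma mu_upper_null : μ {y : ℝ | upperBound μ < (y : EReal)} = 0 := by
  rcases eq_or_ne (upperBound μ) ⊤ with htop | htop
  · have : {y : ℝ | upperBound μ < (y : EReal)} = ∅ := by
      ext y; simp [htop]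
    simp [this]
  rcases eq_or_ne (upperBound μ) ⊥ with hbot | hbot
  · exfalso
    have h1 : ∀ r : ℝ, μ (Iic r) = 1 := fun r =>
      mu_Iic_eq_one μ (by rw [hbot]; exact bot_lt_iff_ne_bot.2 (EReal.coe_ne_bot r))
    have h2 : ∀ n : ℕ, μ (Ioc (-(n : ℝ) - 1) (-1)) = 0 := by
      intro n
      rw [← Iic_sdiff_Iic, measure_diff (Iic_subset_Iic.2 (by linarith [Nat.cast_nonneg (α := ℝ) n]))
        measurableSet_Iic.nullMeasurableSet (measure_ne_top _ _), h1, h1, tsub_self]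
    have hsub : Iic (-1 : ℝ) ⊆ ⋃ n : ℕ, Ioc (-(n : ℝ) - 1) (-1) := by
      intro x hx
      obtain ⟨n, hn⟩ := exists_nat_gt (-x - 1)
      exact mem_iUnion.2 ⟨n, mem_Ioc.2 ⟨by linarith, hx⟩⟩
    have := (measure_mono hsub).trans (le_of_eq (measure_iUnion_null h2))
    rw [h1] at this
    simp at this
  obtain ⟨b, hb⟩ : ∃ b : ℝ, upperBound μ = (b : EReal) := by
    lift upperBound μ to ℝ using ⟨htop, hbot⟩ with b
    exact ⟨b, rfl⟩
  have hset : {y : ℝ | upperBound μ < (y : EReal)} = Ioi b := by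
    ext y; simp [hb, EReal.coe_lt_coe_iff, mem_Ioi]
  rw [hset]
  have hz : ∀ n : ℕ, μ (Ioi (b + 1 / ((n : ℝ) + 1))) = 0 := by
    intro n
    have hlt : upperBound μ < ((b + 1 / ((n : ℝ) + 1) : ℝ) : EReal) := by
      rw [hb, EReal.coe_lt_coe_iff]
      have : (0:ℝ) < 1 / ((n:ℝ)+1) := by positivity
      linarith
    have h1 := mu_Iic_eq_one μ hlt
    rw [← compl_Iic, measure_compl measurableSet_Iic (measure_ne_top _ _), h1, measure_univ,
      tsub_self]
  have hsub : Ioi b ⊆ ⋃ n : ℕ, Ioi (b + 1 / ((n : ℝ) + 1)) := by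
    intro x hx
    obtain ⟨n, hn⟩ := exists_nat_one_div_lt (show (0:ℝ) < x - b by exact sub_pos.2 hx)
    exact mem_iUnion.2 ⟨n, by simp only [mem_Ioi]; linarith⟩
  exact le_antisymm ((measure_mono hsub).trans (le_of_eq (measure_iUnion_null hz))) zero_le

lemma Fstar_upper_null : Fstar μ ν {y : ℝ | upperBound μ < (y : EReal)} = 0 := by
  have hSm : MeasurableSet {y : ℝ | upperBound μ < (y : EReal)} :=
    continuous_coe_real_ereal.measurable (measurableSet_Ioi (a := upperBound μ))
  have hle := Measure.le_iff.1 (Fstar_le_smul μ ν) _ hSm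
  rw [Measure.smul_apply, smul_eq_mul, mu_upper_null μ, mul_zero] at hle
  exact le_antisymm hle zero_le

lemma exists_c1 (hα : alpha μ ν ≠ 0) (c₀ : ℝ) (hc₀ : 0 < c₀)
    (hC : ∀ y : ℝ, lowerBound ν < (y : EReal) → (y : EReal) < upperBound μ →
      c₀ ≤ Cfun μ ν y) :
    ∃ c₁ : ℝ, 0 < c₁ ∧ c₁ ≤ c₀ ∧ ∀ᵐ y ∂(Fstar μ ν), c₁ ≤ Cfun μ ν y := by
  classical
  haveI := isProb_Fstar μ ν hα
  set w : EReal → ℝ := fun e =>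
    if h : ∃ r : ℝ, (r : EReal) = e ∧ 0 < Cfun μ ν r then min 1 (Cfun μ ν h.choose) else 1
    with hw
  have hw_pos : ∀ e, 0 < w e := by
    intro e
    by_cases h : ∃ r : ℝ, (r : EReal) = e ∧ 0 < Cfun μ ν r
    · rw [hw]; simp only [dif_pos h]; exact lt_min one_pos h.choose_spec.2
    · rw [hw]; simp only [dif_neg h]; exact one_pos
  have hw_le : ∀ (e : EReal) (r : ℝ), (r : EReal) = e → 0 < Cfun μ ν r → w e ≤ Cfun μ ν r := by
    intro e r hr hpos
    have hex : ∃ r' : ℝ, (r' : EReal) = e ∧ 0 < Cfun μ ν r' := ⟨r, hr, hpos⟩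
    rw [hw]; simp only [dif_pos hex]
    have : hex.choose = r := by
      have h1 : (hex.choose : EReal) = (r : EReal) := hex.choose_spec.1.trans hr.symm
      exact EReal.coe_eq_coe_iff.1 h1
    rw [this]
    exact min_le_right _ _
  refine ⟨min (min c₀ 1) (min (w (lowerBound ν)) (w (upperBound μ))), ?_, ?_, ?_⟩
  · exact lt_min (lt_min hc₀ one_pos) (lt_min (hw_pos _) (hw_pos _))
  · exact (min_le_left _ _).trans (min_le_left _ _)
  · set c₁ := min (min c₀ 1) (min (w (lowerBound ν)) (w (upperBound μ))) with hc₁def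
    rw [ae_iff]
    have hnull_pt : ∀ e : EReal,
        Fstar μ ν {y : ℝ | (y : EReal) = e ∧ Fstar μ ν {y} = 0} = 0 := by
      intro e
      rcases eq_empty_or_nonempty {y : ℝ | (y : EReal) = e ∧ Fstar μ ν {y} = 0} with h | ⟨y, hy⟩
      · simp [h]
      · refine measure_mono_null (fun y' hy' => ?_) hy.2
        have : (y' : EReal) = (y : EReal) := hy'.1.trans hy.1.symm
        simp [EReal.coe_eq_coe_iff.1 this]
    have hsub : {y : ℝ | ¬ c₁ ≤ Cfun μ ν y} ⊆
        (({y : ℝ | (y : EReal) < lowerBound ν} ∪ {y : ℝ | upperBound μ < (y : EReal)}) ∪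
          {y : ℝ | (y : EReal) = lowerBound ν ∧ Fstar μ ν {y} = 0}) ∪
          {y : ℝ | (y : EReal) = upperBound μ ∧ Fstar μ ν {y} = 0} := by
      intro y hy
      simp only [mem_setOf_eq, not_le] at hy
      by_cases h1 : (y : EReal) < lowerBound ν
      · exact Or.inl (Or.inl (Or.inl h1))
      by_cases h2 : upperBound μ < (y : EReal)
      · exact Or.inl (Or.inl (Or.inr h2))
      have hnb : ¬ (lowerBound ν < (y : EReal) ∧ (y : EReal) < upperBound μ) := by
        rintro ⟨ha, hb⟩
        have := hC y ha hb
        have hle : c₁ ≤ c₀ := (min_le_left _ _).trans (min_le_left _ _)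
        linarith
      have h1' : lowerBound ν ≤ (y : EReal) := not_lt.1 h1
      have h2' : (y : EReal) ≤ upperBound μ := not_lt.1 h2
      rcases h1'.lt_or_eq with h1lt | h1eq
      · rcases h2'.lt_or_eq with h2lt | h2eq
        · exact absurd ⟨h1lt, h2lt⟩ hnb
        · -- y = upper bound
          right
          refine ⟨h2eq, ?_⟩
          by_contra hne
          have hCpos : 0 < Cfun μ ν y :=
            lt_of_lt_of_le (ENNReal.toReal_pos hne (measure_ne_top _ _))
              (Fstar_singleton_le_Cfun μ ν hα y)
          have := hw_le (upperBound μ) y h2eq hCpos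
          have hle : c₁ ≤ w (upperBound μ) := (min_le_right _ _).trans (min_le_right _ _)
          linarith
      · left; right
        refine ⟨h1eq.symm, ?_⟩
        by_contra hne
        have hCpos : 0 < Cfun μ ν y :=
          lt_of_lt_of_le (ENNReal.toReal_pos hne (measure_ne_top _ _))
            (Fstar_singleton_le_Cfun μ ν hα y)
        have := hw_le (lowerBound ν) y h1eq.symm hCpos
        have hle : c₁ ≤ w (lowerBound ν) := (min_le_right _ _).trans (min_le_left _ _)
        linarith
    refine measure_mono_null hsub ?_
    refine measure_union_null (measure_union_null (measure_union_null ?_ ?_) ?_) ?_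
    · exact Fstar_lower_null μ ν
    · exact Fstar_upper_null μ ν
    · exact hnull_pt _
    · exact hnull_pt _

end Aux2
section Aux3
set_option maxHeartbeats 2000000
set_option linter.unusedSectionVars false

variable (μ ν : Measure ℝ) [IsProbabilityMeasure μ] [IsProbabilityMeasure ν]

lemma measurable_setIntegral_Ioi {g : ℝ → ℝ} (hg : Integrable g μ) :
    Measurable fun y => ∫ t in Ioi y, g t ∂μ := by
  have key : ∀ g' : ℝ → ℝ, Integrable g' μ → (∀ t, 0 ≤ g' t) →
      Measurable fun y => ∫ t in Ioi y, g' t ∂μ := by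
    intro g' hg' hpos
    have hanti : Antitone fun y => ∫ t in Ioi y, g' t ∂μ := by
      intro y₁ y₂ h
      exact setIntegral_mono_set hg'.integrableOn (ae_of_all _ fun t => hpos t)
        (HasSubset.Subset.eventuallyLE (Ioi_subset_Ioi h))
    exact hanti.measurable
  have h1 := key _ hg.pos_part (fun t => le_max_right _ _)
  have h2 := key _ hg.neg.pos_part (fun t => le_max_right _ _)
  have heq : (fun y => ∫ t in Ioi y, g t ∂μ) =
      fun y => (∫ t in Ioi y, max (g t) 0 ∂μ) - ∫ t in Ioi y, max (-g t) 0 ∂μ := by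
    funext y
    calc ∫ t in Ioi y, g t ∂μ = ∫ t in Ioi y, (max (g t) 0 - max (-g t) 0) ∂μ :=
          integral_congr_ae (ae_of_all _ fun t =>
            (max_zero_sub_max_neg_zero_eq_self (g t)).symm)
      _ = _ := integral_sub hg.pos_part.integrableOn hg.neg.pos_part.integrableOn
  rw [heq]; exact h1.sub h2

lemma measurable_mIoi : Measurable fun y => (μ (Ioi y)).toReal := by
  have hanti : Antitone fun y => (μ (Ioi y)).toReal := fun a b hab =>
    ENNReal.toReal_mono (measure_ne_top _ _) (measure_mono (Ioi_subset_Ioi hab))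
  exact hanti.measurable

lemma A_eq {g : ℝ → ℝ} (hg : Integrable g μ) (c : ℝ) (y : ℝ) :
    ∫ t in Ioi y, (c - g t) ∂μ = c * (μ (Ioi y)).toReal - ∫ t in Ioi y, g t ∂μ := by
  rw [integral_sub (integrable_const c).integrableOn hg.integrableOn,
    setIntegral_const, smul_eq_mul, mul_comm, measureReal_def]

lemma abs_A_le {f g : ℝ → ℝ} (hg : Integrable g μ) (y : ℝ) :
    |∫ t in Ioi y, (f y - g t) ∂μ| ≤ |f y| + ∫ t, |g t| ∂μ := by
  have h1 : |∫ t in Ioi y, (f y - g t) ∂μ| ≤ ∫ t in Ioi y, |f y - g t| ∂μ := by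
    simpa [Real.norm_eq_abs] using
      norm_integral_le_integral_norm (μ := μ.restrict (Ioi y)) (fun t => f y - g t)
  have h2 : ∫ t in Ioi y, |f y - g t| ∂μ ≤ ∫ t in Ioi y, (|f y| + |g t|) ∂μ := by
    refine integral_mono_ae ((integrable_const (f y)).sub hg).abs.integrableOn
      ((integrable_const |f y|).add hg.abs).integrableOn (ae_of_all _ fun t => abs_sub _ _)
  have h3 : ∫ t in Ioi y, (|f y| + |g t|) ∂μ
      = |f y| * (μ (Ioi y)).toReal + ∫ t in Ioi y, |g t| ∂μ := by
    rw [integral_add (integrable_const |f y|).integrableOn hg.abs.integrableOn,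
      setIntegral_const, smul_eq_mul, mul_comm, measureReal_def]
  have hm1 : (μ (Ioi y)).toReal ≤ 1 := by
    simpa using ENNReal.toReal_mono ENNReal.one_ne_top (prob_le_one (μ := μ) (s := Ioi y))
  have h4 : |f y| * (μ (Ioi y)).toReal ≤ |f y| :=
    mul_le_of_le_one_right (abs_nonneg _) hm1
  have h5 : ∫ t in Ioi y, |g t| ∂μ ≤ ∫ t, |g t| ∂μ :=
    setIntegral_le_integral hg.abs (ae_of_all _ fun t => abs_nonneg _)
  linarith

lemma A_mono {g₁ g₂ : ℝ → ℝ} {a b : ℝ} (hg₁ : Integrable g₁ μ) (hg₂ : Integrable g₂ μ)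
    (hab : a ≤ b) (hg : ∀ x, g₂ x ≤ g₁ x) (y : ℝ) :
    ∫ t in Ioi y, (a - g₁ t) ∂μ ≤ ∫ t in Ioi y, (b - g₂ t) ∂μ :=
  integral_mono_ae ((integrable_const a).sub hg₁).integrableOn
    ((integrable_const b).sub hg₂).integrableOn
    (ae_of_all _ fun t => sub_le_sub hab (hg t))

lemma div_le_div_nonneg_denom {a b c : ℝ} (h : a ≤ b) (hc : 0 ≤ c) : a / c ≤ b / c := by
  rcases hc.eq_or_lt with h0 | h0
  · simp [← h0]
  · exact (div_le_div_iff_of_pos_right h0).2 h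

lemma integrable_Fstar (hα : alpha μ ν ≠ 0) {f : ℝ → ℝ} (hf : Integrable f μ) :
    Integrable f (Fstar μ ν) :=
  (hf.smul_measure (ENNReal.inv_ne_top.2 hα)).mono_measure (Fstar_le_smul μ ν)

lemma integrable_Q (hα : alpha μ ν ≠ 0) {f g : ℝ → ℝ} (hf : Integrable f μ)
    (hg : Integrable g μ) {c₁ : ℝ} (hc₁ : 0 < c₁)
    (hae : ∀ᵐ y ∂(Fstar μ ν), c₁ ≤ Cfun μ ν y) (s : Set ℝ) :
    Integrable (fun y => (∫ t in Ioi y, (f y - g t) ∂μ) / (Cfun μ ν y) ^ 2)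
      ((Fstar μ ν).restrict s) := by
  haveI := isProb_Fstar μ ν hα
  obtain ⟨f', hf'm, hff'⟩ := hf.1.aemeasurable
  have hMmeas : Measurable fun y =>
      (f' y * (μ (Ioi y)).toReal - ∫ t in Ioi y, g t ∂μ) / (Cfun μ ν y) ^ 2 :=
    ((hf'm.mul (measurable_mIoi μ)).sub (measurable_setIntegral_Ioi μ hg)).div
      ((measurable_Cfun μ ν hα).pow_const 2)
  have hff'F : f =ᵐ[Fstar μ ν] f' := (Fstar_ac μ ν).ae_eq hff'
  have haeeq : (fun y => (∫ t in Ioi y, (f y - g t) ∂μ) / (Cfun μ ν y) ^ 2) =ᵐ[Fstar μ ν]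
      (fun y => (f' y * (μ (Ioi y)).toReal - ∫ t in Ioi y, g t ∂μ) / (Cfun μ ν y) ^ 2) := by
    filter_upwards [hff'F] with y hy
    rw [A_eq μ hg, hy]
  have hasm : AEStronglyMeasurable
      (fun y => (∫ t in Ioi y, (f y - g t) ∂μ) / (Cfun μ ν y) ^ 2)
      ((Fstar μ ν).restrict s) :=
    (hMmeas.aestronglyMeasurable.congr haeeq.symm).restrict
  have hbnd : Integrable (fun y => (|f y| + ∫ t, |g t| ∂μ) / c₁ ^ 2)
      ((Fstar μ ν).restrict s) :=
    (((integrable_Fstar μ ν hα hf).abs.add (integrable_const _)).div_const _).restrict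
  refine Integrable.mono' hbnd hasm (ae_restrict_of_ae ?_)
  filter_upwards [hae] with y hy
  rw [Real.norm_eq_abs, abs_div, abs_of_nonneg (sq_nonneg (Cfun μ ν y))]
  exact div_le_div₀ (by positivity) (abs_A_le μ hg y) (by positivity)
    (pow_le_pow_left₀ hc₁.le hy 2)

end Aux3
section Aux4
set_option maxHeartbeats 2000000
set_option linter.unusedSectionVars false

variable (μ ν : Measure ℝ) [IsProbabilityMeasure μ] [IsProbabilityMeasure ν]

lemma part1 (hα : alpha μ ν ≠ 0) {c₁ : ℝ} (hc₁ : 0 < c₁)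
    (hae : ∀ᵐ y ∂(Fstar μ ν), c₁ ≤ Cfun μ ν y)
    (l u φ : ℝ → ℝ) (hφm : Measurable φ) (hl : Integrable l μ) (hu : Integrable u μ)
    (hbr : ∀ x, l x ≤ φ x ∧ φ x ≤ u x) (p : ℝ × ℝ) :
    bracketLow μ ν l u p ≤ zeta μ ν φ p ∧ zeta μ ν φ p ≤ bracketHigh μ ν l u p := by
  have hφ : Integrable φ μ := by
    refine (hl.abs.add hu.abs).mono' hφm.aestronglyMeasurable (ae_of_all _ fun x => ?_)
    simp only [Pi.add_apply]
    rw [Real.norm_eq_abs, abs_le]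
    constructor
    · have := neg_abs_le (l x); have := (hbr x).1; linarith [abs_nonneg (u x)]
    · have := le_abs_self (u x); have := (hbr x).2; linarith [abs_nonneg (l x)]
  have hC0 : 0 ≤ Cfun μ ν p.1 := Cfun_nonneg μ ν hα p.1
  constructor
  · refine sub_le_sub ?_ ?_
    · exact div_le_div_nonneg_denom
        (A_mono μ hu hφ (hbr p.1).1 (fun t => (hbr t).2) p.1) hC0
    · refine integral_mono_ae (integrable_Q μ ν hα hφ hφ hc₁ hae _)
        (integrable_Q μ ν hα hu hl hc₁ hae _) (ae_of_all _ fun y => ?_)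
      exact div_le_div_nonneg_denom
        (A_mono μ hφ hl (hbr y).2 (fun t => (hbr t).1) y) (sq_nonneg _)
  · refine sub_le_sub ?_ ?_
    · exact div_le_div_nonneg_denom
        (A_mono μ hφ hl (hbr p.1).2 (fun t => (hbr t).1) p.1) hC0
    · refine integral_mono_ae (integrable_Q μ ν hα hl hu hc₁ hae _)
        (integrable_Q μ ν hα hφ hφ hc₁ hae _) (ae_of_all _ fun y => ?_)
      exact div_le_div_nonneg_denom
        (A_mono μ hu hφ (hbr y).1 (fun t => (hbr t).2) y) (sq_nonneg _)

end Aux4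
section Aux5
set_option maxHeartbeats 4000000
set_option linter.unusedSectionVars false
set_option linter.deprecated false

variable (μ ν : Measure ℝ) [IsProbabilityMeasure μ] [IsProbabilityMeasure ν]

lemma part2 (hα : alpha μ ν ≠ 0) {c₁ : ℝ} (hc₁ : 0 < c₁)
    (hae : ∀ᵐ y ∂(Fstar μ ν), c₁ ≤ Cfun μ ν y) :
    ∃ K : ℝ, 0 < K ∧ ∀ l u : ℝ → ℝ, MemLp l 2 μ → MemLp u 2 μ → (∀ x, l x ≤ u x) →
      ∫⁻ p, ENNReal.ofReal ((bracketHigh μ ν l u p - bracketLow μ ν l u p) ^ 2)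
          ∂(obsLaw μ ν) ≤
        ENNReal.ofReal K * ∫⁻ x, ENNReal.ofReal ((u x - l x) ^ 2) ∂μ := by
  haveI := isProb_obsLaw μ ν hα
  haveI := isProb_Fstar μ ν hα
  set a' := ((alpha μ ν)⁻¹).toReal with ha'
  have ha'0 : 0 ≤ a' := ENNReal.toReal_nonneg
  set E : ℝ := c₁⁻¹ + (a' + 1) / c₁ ^ 2 with hE
  have hE0 : 0 ≤ E := by
    rw [hE]
    have : 0 ≤ (a' + 1) / c₁ ^ 2 := div_nonneg (by linarith) (by positivity)
    have : 0 ≤ c₁⁻¹ := by positivity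
    linarith
  have hK0 : (0:ℝ) < 2 * c₁⁻¹ ^ 2 * a' + 2 * E ^ 2 + 1 := by
    have h1 : 0 ≤ 2 * c₁⁻¹ ^ 2 * a' := mul_nonneg (by positivity) ha'0
    nlinarith [sq_nonneg E]
  refine ⟨2 * c₁⁻¹ ^ 2 * a' + 2 * E ^ 2 + 1, hK0, ?_⟩
  intro l u hl2 hu2 hlu
  have hl : Integrable l μ := hl2.integrable one_le_two
  have hu : Integrable u μ := hu2.integrable one_le_two
  have hh : Integrable (fun x => u x - l x) μ := hu.sub hl
  have hh0 : ∀ x, 0 ≤ u x - l x := fun x => sub_nonneg.2 (hlu x)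
  set B := ∫ x, (u x - l x) ∂μ with hB
  have hB0 : 0 ≤ B := integral_nonneg hh0
  have hη : ∀ y : ℝ, (0 ≤ (∫ t in Ioi y, (u y - l t) ∂μ) - ∫ t in Ioi y, (l y - u t) ∂μ) ∧
      (∫ t in Ioi y, (u y - l t) ∂μ) - (∫ t in Ioi y, (l y - u t) ∂μ) ≤ (u y - l y) + B := by
    intro y
    have hint1 : IntegrableOn (fun t => u y - l t) (Ioi y) μ :=
      ((integrable_const _).sub hl).integrableOn
    have hint2 : IntegrableOn (fun t => l y - u t) (Ioi y) μ :=
      ((integrable_const _).sub hu).integrableOn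
    have e1 : (∫ t in Ioi y, (u y - l t) ∂μ) - ∫ t in Ioi y, (l y - u t) ∂μ
        = ∫ t in Ioi y, ((u y - l y) + (u t - l t)) ∂μ := by
      rw [← integral_sub hint1 hint2]
      exact integral_congr_ae (ae_of_all _ fun t => by ring)
    constructor
    · rw [e1]
      exact setIntegral_nonneg measurableSet_Ioi fun t _ => add_nonneg (hh0 y) (hh0 t)
    · rw [e1]
      calc ∫ t in Ioi y, ((u y - l y) + (u t - l t)) ∂μ
          ≤ ∫ t, ((u y - l y) + (u t - l t)) ∂μ :=
            setIntegral_le_integral ((integrable_const _).add hh)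
              (ae_of_all _ fun t => add_nonneg (hh0 y) (hh0 t))
        _ = (u y - l y) + B := by
            rw [integral_add (integrable_const _) hh, integral_const, probReal_univ]
            simp [← hB]
  have haeC : ∀ᵐ p ∂(obsLaw μ ν), c₁ ≤ Cfun μ ν p.1 :=
    ae_of_ae_map measurable_fst.aemeasurable hae
  have hptw : ∀ᵐ p ∂(obsLaw μ ν),
      (0 ≤ bracketHigh μ ν l u p - bracketLow μ ν l u p) ∧
      bracketHigh μ ν l u p - bracketLow μ ν l u p ≤ c₁⁻¹ * (u p.1 - l p.1) + B * E := by
    filter_upwards [haeC] with p hp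
    have hcomb : (∫ y in Ioc p.2 p.1, (∫ t in Ioi y, (u y - l t) ∂μ) / (Cfun μ ν y) ^ 2
          ∂(Fstar μ ν)) - ∫ y in Ioc p.2 p.1, (∫ t in Ioi y, (l y - u t) ∂μ) / (Cfun μ ν y) ^ 2
          ∂(Fstar μ ν)
        = ∫ y in Ioc p.2 p.1, ((∫ t in Ioi y, (u y - l t) ∂μ)
            - ∫ t in Ioi y, (l y - u t) ∂μ) / (Cfun μ ν y) ^ 2 ∂(Fstar μ ν) := by
      rw [← integral_sub (integrable_Q μ ν hα hu hl hc₁ hae _)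
        (integrable_Q μ ν hα hl hu hc₁ hae _)]
      exact integral_congr_ae (ae_of_all _ fun y => (div_sub_div_same _ _ _))
    have hsplit : bracketHigh μ ν l u p - bracketLow μ ν l u p
        = ((∫ t in Ioi p.1, (u p.1 - l t) ∂μ) - ∫ t in Ioi p.1, (l p.1 - u t) ∂μ)
            / Cfun μ ν p.1
          + ∫ y in Ioc p.2 p.1, ((∫ t in Ioi y, (u y - l t) ∂μ)
              - ∫ t in Ioi y, (l y - u t) ∂μ) / (Cfun μ ν y) ^ 2 ∂(Fstar μ ν) := by
      rw [← hcomb]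
      unfold bracketHigh bracketLow
      ring
    rw [hsplit]
    have h1 := hη p.1
    have hC0 : 0 ≤ Cfun μ ν p.1 := Cfun_nonneg μ ν hα p.1
    have ht1a : 0 ≤ ((∫ t in Ioi p.1, (u p.1 - l t) ∂μ)
        - ∫ t in Ioi p.1, (l p.1 - u t) ∂μ) / Cfun μ ν p.1 := div_nonneg h1.1 hC0
    have ht1b : ((∫ t in Ioi p.1, (u p.1 - l t) ∂μ)
        - ∫ t in Ioi p.1, (l p.1 - u t) ∂μ) / Cfun μ ν p.1 ≤ ((u p.1 - l p.1) + B) / c₁ :=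
      div_le_div₀ (add_nonneg (hh0 p.1) hB0) h1.2 hc₁ hp
    have hQint : Integrable (fun y => ((∫ t in Ioi y, (u y - l t) ∂μ)
        - ∫ t in Ioi y, (l y - u t) ∂μ) / (Cfun μ ν y) ^ 2)
        ((Fstar μ ν).restrict (Ioc p.2 p.1)) :=
      ((integrable_Q μ ν hα hu hl hc₁ hae _).sub
        (integrable_Q μ ν hα hl hu hc₁ hae _)).congr
        (ae_of_all _ fun y => div_sub_div_same _ _ _)
    have ht2a : 0 ≤ ∫ y in Ioc p.2 p.1, ((∫ t in Ioi y, (u y - l t) ∂μ)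
        - ∫ t in Ioi y, (l y - u t) ∂μ) / (Cfun μ ν y) ^ 2 ∂(Fstar μ ν) :=
      integral_nonneg fun y => div_nonneg (hη y).1 (sq_nonneg _)
    have hbndint : Integrable (fun y => ((u y - l y) + B) / c₁ ^ 2) (Fstar μ ν) :=
      ((integrable_Fstar μ ν hα hh).add (integrable_const _)).div_const _
    have ht2b : ∫ y in Ioc p.2 p.1, ((∫ t in Ioi y, (u y - l t) ∂μ)
        - ∫ t in Ioi y, (l y - u t) ∂μ) / (Cfun μ ν y) ^ 2 ∂(Fstar μ ν)
        ≤ (a' * B + B) / c₁ ^ 2 := by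
      have step1 : ∫ y in Ioc p.2 p.1, ((∫ t in Ioi y, (u y - l t) ∂μ)
          - ∫ t in Ioi y, (l y - u t) ∂μ) / (Cfun μ ν y) ^ 2 ∂(Fstar μ ν)
          ≤ ∫ y in Ioc p.2 p.1, ((u y - l y) + B) / c₁ ^ 2 ∂(Fstar μ ν) := by
        refine integral_mono_ae hQint hbndint.restrict (ae_restrict_of_ae ?_)
        filter_upwards [hae] with y hy
        exact div_le_div₀ (add_nonneg (hh0 y) hB0) (hη y).2 (by positivity)
          (pow_le_pow_left₀ hc₁.le hy 2)
      have step2 : ∫ y in Ioc p.2 p.1, ((u y - l y) + B) / c₁ ^ 2 ∂(Fstar μ ν)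
          ≤ ∫ y, ((u y - l y) + B) / c₁ ^ 2 ∂(Fstar μ ν) :=
        setIntegral_le_integral hbndint
          (ae_of_all _ fun y => div_nonneg (add_nonneg (hh0 y) hB0) (by positivity))
      have step3 : ∫ y, ((u y - l y) + B) / c₁ ^ 2 ∂(Fstar μ ν)
          = ((∫ y, (u y - l y) ∂(Fstar μ ν)) + B) / c₁ ^ 2 := by
        rw [integral_div, integral_add (integrable_Fstar μ ν hα hh) (integrable_const _),
          integral_const, probReal_univ]
        simp
      have step4 : ∫ y, (u y - l y) ∂(Fstar μ ν) ≤ a' * B := by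
        calc ∫ y, (u y - l y) ∂(Fstar μ ν)
            ≤ ∫ y, (u y - l y) ∂((alpha μ ν)⁻¹ • μ) :=
              integral_mono_measure (Fstar_le_smul μ ν) (ae_of_all _ hh0)
                (hh.smul_measure (ENNReal.inv_ne_top.2 hα))
          _ = a' * B := by rw [integral_smul_measure, smul_eq_mul, ← hB]
      calc _ ≤ ∫ y, ((u y - l y) + B) / c₁ ^ 2 ∂(Fstar μ ν) := step1.trans step2
        _ = ((∫ y, (u y - l y) ∂(Fstar μ ν)) + B) / c₁ ^ 2 := step3
        _ ≤ (a' * B + B) / c₁ ^ 2 :=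
            div_le_div_nonneg_denom (by linarith) (by positivity)
    refine ⟨add_nonneg ht1a ht2a, (add_le_add ht1b ht2b).trans (le_of_eq ?_)⟩
    rw [hE]
    field_simp
    ring
  -- L² part
  set I := ∫⁻ x, ENNReal.ofReal ((u x - l x) ^ 2) ∂μ with hI
  have hhm : AEMeasurable (fun x => u x - l x) μ := (hu.1.sub hl.1).aemeasurable
  have hsq : Integrable (fun x => (u x - l x) ^ 2) μ := (hu2.sub hl2).integrable_sq
  have hB2 : B ^ 2 ≤ ∫ x, (u x - l x) ^ 2 ∂μ := by
    have h0 : 0 ≤ ∫ x, ((u x - l x) - B) ^ 2 ∂μ := integral_nonneg fun x => sq_nonneg _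
    have hexp : ∫ x, ((u x - l x) - B) ^ 2 ∂μ = ∫ x, (u x - l x) ^ 2 ∂μ - B ^ 2 := by
      have e : ∀ x : ℝ, ((u x - l x) - B) ^ 2
          = ((u x - l x) ^ 2 - 2 * B * (u x - l x)) + B ^ 2 := fun x => by ring
      simp_rw [e]
      have hint : Integrable (fun x => (u x - l x) ^ 2 - 2 * B * (u x - l x)) μ := by
        exact hsq.sub (hh.const_mul (2 * B))
      rw [integral_add hint (integrable_const _),
        integral_sub hsq (hh.const_mul (2 * B)), integral_const_mul, integral_const,
        probReal_univ]
      simp [← hB]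
      ring
    linarith
  have hIB : ENNReal.ofReal (B ^ 2) ≤ I := by
    calc ENNReal.ofReal (B ^ 2) ≤ ENNReal.ofReal (∫ x, (u x - l x) ^ 2 ∂μ) :=
        ENNReal.ofReal_le_ofReal hB2
      _ = I := by
        rw [hI, ofReal_integral_eq_lintegral_ofReal hsq (ae_of_all _ fun x => sq_nonneg _)]
  have hfmF : AEMeasurable (fun y => ENNReal.ofReal (2 * c₁⁻¹ ^ 2 * (u y - l y) ^ 2))
      (Fstar μ ν) := by
    have base : AEMeasurable (fun x => u x - l x) (Fstar μ ν) := hhm.mono_ac (Fstar_ac μ ν)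
    exact ENNReal.measurable_ofReal.comp_aemeasurable
      (((base.pow_const 2).const_mul (2 * c₁⁻¹ ^ 2)))
  have hmap : ∫⁻ y, ENNReal.ofReal (2 * c₁⁻¹ ^ 2 * (u y - l y) ^ 2) ∂(Fstar μ ν)
      = ∫⁻ p, ENNReal.ofReal (2 * c₁⁻¹ ^ 2 * (u p.1 - l p.1) ^ 2) ∂(obsLaw μ ν) :=
    lintegral_map' hfmF measurable_fst.aemeasurable
  have h1st : ∫⁻ y, ENNReal.ofReal (2 * c₁⁻¹ ^ 2 * (u y - l y) ^ 2) ∂(Fstar μ ν)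
      ≤ ENNReal.ofReal (2 * c₁⁻¹ ^ 2) * ((alpha μ ν)⁻¹ * I) := by
    calc ∫⁻ y, ENNReal.ofReal (2 * c₁⁻¹ ^ 2 * (u y - l y) ^ 2) ∂(Fstar μ ν)
        ≤ ∫⁻ y, ENNReal.ofReal (2 * c₁⁻¹ ^ 2 * (u y - l y) ^ 2) ∂((alpha μ ν)⁻¹ • μ) :=
          lintegral_mono' (Fstar_le_smul μ ν) le_rfl
      _ = (alpha μ ν)⁻¹ * ∫⁻ y, ENNReal.ofReal (2 * c₁⁻¹ ^ 2 * (u y - l y) ^ 2) ∂μ :=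
          lintegral_smul_measure _ _
      _ = (alpha μ ν)⁻¹ * (ENNReal.ofReal (2 * c₁⁻¹ ^ 2) * I) := by
          congr 1
          rw [hI, ← lintegral_const_mul' _ _ ENNReal.ofReal_ne_top]
          refine lintegral_congr fun x => ?_
          rw [← ENNReal.ofReal_mul (by positivity)]
      _ = ENNReal.ofReal (2 * c₁⁻¹ ^ 2) * ((alpha μ ν)⁻¹ * I) := by ring
  have h2nd : ENNReal.ofReal (2 * (B * E) ^ 2) ≤ ENNReal.ofReal (2 * E ^ 2) * I := by
    have he : (2 : ℝ) * (B * E) ^ 2 = (2 * E ^ 2) * B ^ 2 := by ring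
    rw [he, ENNReal.ofReal_mul (by positivity)]
    exact mul_le_mul_right hIB _
  calc ∫⁻ p, ENNReal.ofReal ((bracketHigh μ ν l u p - bracketLow μ ν l u p) ^ 2) ∂(obsLaw μ ν)
      ≤ ∫⁻ p, ENNReal.ofReal ((c₁⁻¹ * (u p.1 - l p.1) + B * E) ^ 2) ∂(obsLaw μ ν) := by
        refine lintegral_mono_ae ?_
        filter_upwards [hptw] with p hp
        exact ENNReal.ofReal_le_ofReal (pow_le_pow_left₀ hp.1 hp.2 2)
    _ ≤ ∫⁻ p, (ENNReal.ofReal (2 * c₁⁻¹ ^ 2 * (u p.1 - l p.1) ^ 2)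
          + ENNReal.ofReal (2 * (B * E) ^ 2)) ∂(obsLaw μ ν) := by
        refine lintegral_mono fun p => ?_
        rw [← ENNReal.ofReal_add (mul_nonneg (by positivity) (sq_nonneg _)) (by positivity)]
        refine ENNReal.ofReal_le_ofReal ?_
        nlinarith [sq_nonneg (c₁⁻¹ * (u p.1 - l p.1) - B * E)]
    _ = (∫⁻ p, ENNReal.ofReal (2 * c₁⁻¹ ^ 2 * (u p.1 - l p.1) ^ 2) ∂(obsLaw μ ν))
          + ENNReal.ofReal (2 * (B * E) ^ 2) := by
        rw [lintegral_add_right _ measurable_const, lintegral_const, measure_univ, mul_one]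
    _ ≤ ENNReal.ofReal (2 * c₁⁻¹ ^ 2) * ((alpha μ ν)⁻¹ * I) + ENNReal.ofReal (2 * E ^ 2) * I :=
        add_le_add (le_of_eq hmap.symm |>.trans h1st) h2nd
    _ ≤ ENNReal.ofReal (2 * c₁⁻¹ ^ 2 * a' + 2 * E ^ 2 + 1) * I := by
        have hα' : (alpha μ ν)⁻¹ = ENNReal.ofReal a' := by
          rw [ha', ENNReal.ofReal_toReal (ENNReal.inv_ne_top.2 hα)]
        rw [hα']
        have hee : ENNReal.ofReal (2 * c₁⁻¹ ^ 2) * (ENNReal.ofReal a' * I)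
            + ENNReal.ofReal (2 * E ^ 2) * I
            = (ENNReal.ofReal (2 * c₁⁻¹ ^ 2) * ENNReal.ofReal a'
              + ENNReal.ofReal (2 * E ^ 2)) * I := by ring
        rw [hee]
        refine mul_le_mul_left ?_ _
        rw [← ENNReal.ofReal_mul (by positivity)]
        calc ENNReal.ofReal (2 * c₁⁻¹ ^ 2 * a') + ENNReal.ofReal (2 * E ^ 2)
            = ENNReal.ofReal (2 * c₁⁻¹ ^ 2 * a' + 2 * E ^ 2) :=
              (ENNReal.ofReal_add (mul_nonneg (by positivity) ha'0) (by positivity)).symm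
          _ ≤ _ := ENNReal.ofReal_le_ofReal (by linarith)

end Aux5

/-- **Bracket transfer bound** (proof of Lemma 3.6). If `c₀ = inf_{a_G<y<b_F} C(y) > 0`,
then `[g^l, g^u]` brackets `ζ(φ)` whenever `[l, u]` brackets `φ`, and
`E[(g^u − g^l)²] ≤ K ∫ (u − l)² dF` with `K` depending only on `c₀`. -/
theorem bracket_transfer_bound
    (μ ν : Measure ℝ) [IsProbabilityMeasure μ] [IsProbabilityMeasure ν]
    (hα : alpha μ ν ≠ 0)
    (c₀ : ℝ) (hc₀ : 0 < c₀)
    (hC : ∀ y : ℝ, lowerBound ν < (y : EReal) → (y : EReal) < upperBound μ →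
      c₀ ≤ Cfun μ ν y) :
    (∀ l u φ : ℝ → ℝ, Measurable φ → MemLp l 2 μ → MemLp u 2 μ →
        (∀ x, l x ≤ φ x ∧ φ x ≤ u x) →
        ∀ p : ℝ × ℝ,
          bracketLow μ ν l u p ≤ zeta μ ν φ p ∧ zeta μ ν φ p ≤ bracketHigh μ ν l u p) ∧
      ∃ K : ℝ, 0 < K ∧ ∀ l u : ℝ → ℝ, MemLp l 2 μ → MemLp u 2 μ → (∀ x, l x ≤ u x) →
        ∫⁻ p, ENNReal.ofReal ((bracketHigh μ ν l u p - bracketLow μ ν l u p) ^ 2)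
            ∂(obsLaw μ ν) ≤
          ENNReal.ofReal K * ∫⁻ x, ENNReal.ofReal ((u x - l x) ^ 2) ∂μ := by
  obtain ⟨c₁, hc₁, -, hae⟩ := exists_c1 μ ν hα c₀ hc₀ hC
  constructor
  · intro l u φ hφm hl2 hu2 hbr p
    exact part1 μ ν hα hc₁ hae l u φ hφm (hl2.integrable one_le_two)
      (hu2.integrable one_le_two) hbr p
  · exact part2 μ ν hα hc₁ hae

end RLTM
end
end

section
/- In the random left truncation model, the function C(y) := G*(y) − F*(y⁻) satisfies the identity C(y) = α⁻¹ G(y)(1 − F(y⁻)) for all y ∈ ℝ. -/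
open MeasureTheory ProbabilityTheory Filter Set
open scoped ENNReal NNReal Topology BigOperators

noncomputable section

namespace RLTM

variable {Ω : Type*}

/-- **Identity (1.5).** In the random left truncation model,
`C(y) = G*(y) − F*(y⁻) = α⁻¹ G(y) (1 − F(y⁻))` for all `y`. -/
theorem Cfun_eq
    (μ ν : Measure ℝ) [IsProbabilityMeasure μ] [IsProbabilityMeasure ν]
    (hα : alpha μ ν ≠ 0) :
    ∀ y : ℝ, Cfun μ ν y = ((alpha μ ν).toReal)⁻¹ * cdf ν y * (1 - cdfLeft μ y) := by
  intro y
  set κ := μ.prod ν with hκdef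
  have hS : MeasurableSet {p : ℝ × ℝ | p.2 ≤ p.1} :=
    measurableSet_le measurable_snd measurable_fst
  set A : Set (ℝ × ℝ) := {p | p.2 ≤ y} ∩ {p | p.2 ≤ p.1} with hAdef
  set B : Set (ℝ × ℝ) := {p | p.1 < y} ∩ {p | p.2 ≤ p.1} with hBdef
  have hαfin : alpha μ ν ≠ ⊤ := (measure_lt_top κ _).ne
  have hG : (Gstar μ ν) (Iic y) = (alpha μ ν)⁻¹ * κ A := by
    rw [Gstar, obsLaw, Measure.map_smul, Measure.smul_apply,
      Measure.map_apply measurable_snd measurableSet_Iic,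
      Measure.restrict_apply (measurable_snd measurableSet_Iic)]
    rfl
  have hF : (Fstar μ ν) (Iio y) = (alpha μ ν)⁻¹ * κ B := by
    rw [Fstar, obsLaw, Measure.map_smul, Measure.smul_apply,
      Measure.map_apply measurable_fst measurableSet_Iio,
      Measure.restrict_apply (measurable_fst measurableSet_Iio)]
    rfl
  have hBA : B ⊆ A := by
    rintro p ⟨h1, h2⟩
    simp only [hAdef, hBdef, Set.mem_inter_iff, Set.mem_setOf_eq] at *
    exact ⟨(h2.trans_lt h1).le, h2⟩
  have hdiff : A \ B = Ici y ×ˢ Iic y := by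
    ext p
    simp only [hAdef, hBdef, Set.mem_diff, Set.mem_inter_iff, Set.mem_setOf_eq,
      Set.mem_prod, Set.mem_Ici, Set.mem_Iic]
    constructor
    · rintro ⟨⟨h1, h2⟩, h3⟩
      exact ⟨not_lt.mp fun hx => h3 ⟨hx, h2⟩, h1⟩
    · rintro ⟨h1, h2⟩
      exact ⟨⟨h2, h2.trans h1⟩, fun hc => absurd hc.1 (not_lt.mpr h1)⟩
  have hB : MeasurableSet B := (measurable_fst measurableSet_Iio).inter hS
  have hsplit : κ B + κ (A \ B) = κ A := by
    rw [measure_add_diff hB.nullMeasurableSet A, Set.union_eq_self_of_subset_left hBA]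
  have hprod : κ (A \ B) = μ (Ici y) * ν (Iic y) := by
    rw [hdiff, hκdef, Measure.prod_prod]
  have hμcompl : (μ (Ici y)).toReal = 1 - cdfLeft μ y := by
    have h := measure_compl (μ := μ) (measurableSet_Iio (a := y)) (measure_ne_top _ _)
    rw [compl_Iio] at h
    rw [h, measure_univ, ENNReal.toReal_sub_of_le prob_le_one ENNReal.one_ne_top]
    simp [cdfLeft]
  have hCfun : Cfun μ ν y =
      ((alpha μ ν).toReal)⁻¹ * ((κ A).toReal - (κ B).toReal) := by
    rw [Cfun, cdf, cdfLeft, hG, hF, ENNReal.toReal_mul, ENNReal.toReal_mul,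
      ENNReal.toReal_inv]
    ring
  rw [hCfun]
  have hAB : (κ A).toReal - (κ B).toReal = (κ (A \ B)).toReal := by
    rw [← hsplit, ENNReal.toReal_add (measure_ne_top _ _) (measure_ne_top _ _)]
    ring
  rw [hAB, hprod, ENNReal.toReal_mul, hμcompl, cdf]
  ring

end RLTM
end
end
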